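/- Let 𝔄₁ and 𝔄₂ be mutually commuting C*-subalgebras of a C*-algebra 𝔄 that are Schlieder independent. Then ‖A₁A₂‖ = ‖A₁‖·‖A₂‖ for all A₁ ∈ 𝔄₁ and A₂ ∈ 𝔄₂. -/

import Mathlib

section aux

variable {A : Type*} [CStarAlgebra A]

/-- The continuous functional calculus of a selfadjoint element of a closed star subalgebra
stays in the subalgebra. -/
lemma cfc_mem_of_mem_of_isClosed (S : StarSubalgebra ℂ A) (hS : IsClosed (S : Set A))
    {a : A} (haS : a ∈ S) (ha : IsSelfAdjoint a) (f : ℝ → ℝ) :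
    cfc f a ∈ S := by
  by_cases hf : ContinuousOn f (spectrum ℝ a)
  · rw [cfc_apply f a ha hf]
    generalize (⟨_, hf.restrict⟩ : C(spectrum ℝ a, ℝ)) = g
    induction g using ContinuousMap.induction_on_of_compact with
    | const r =>
        have h1 : (ContinuousMap.const (spectrum ℝ a) r)
            = algebraMap ℝ C(spectrum ℝ a, ℝ) r := rfl
        rw [h1, AlgHomClass.commutes, IsScalarTower.algebraMap_apply ℝ ℂ A]
        exact S.algebraMap_mem _
    | id => rw [cfcHom_id ha]; exact haS
    | star_id => rw [map_star, cfcHom_id ha]; exact star_mem haS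
    | add f g hf hg => rw [map_add]; exact add_mem hf hg
    | mul f g hf hg => rw [map_mul]; exact mul_mem hf hg
    | frequently f hf =>
        have h1 : f ∈ closure {g | cfcHom ha g ∈ S} := mem_closure_iff_frequently.mpr hf
        have h2 := map_mem_closure (t := (S : Set A))
          (cfcHom_isClosedEmbedding ha).continuous h1 (fun g hg => hg)
        rwa [hS.closure_eq] at h2
  · rw [cfc_apply_of_not_continuousOn a hf]; exact zero_mem S

variable [PartialOrder A] [StarOrderedRing A]

lemma norm_mul_le_of_star_mul_le {p q : A} (h : star p * p ≤ star q * q) (x : A) :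
    ‖p * x‖ ≤ ‖q * x‖ := by
  have h1 : star (p * x) * (p * x) ≤ star (q * x) * (q * x) := by
    simpa [star_mul, mul_assoc] using star_left_conjugate_le_conjugate h x
  have h2 := CStarAlgebra.norm_le_norm_of_nonneg_of_le (star_mul_self_nonneg _) h1
  rw [CStarRing.norm_star_mul_self, CStarRing.norm_star_mul_self] at h2
  nlinarith [norm_nonneg (p * x), norm_nonneg (q * x)]

lemma core_schlieder {S₁ S₂ : StarSubalgebra ℂ A}
    (hS₁ : IsClosed (S₁ : Set A)) (hS₂ : IsClosed (S₂ : Set A))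
    (hcomm : ∀ a ∈ S₁, ∀ b ∈ S₂, a * b = b * a)
    (hSch : ∀ a ∈ S₁, ∀ b ∈ S₂, a ≠ 0 → b ≠ 0 → a * b ≠ 0)
    {h₁ h₂ : A} (h₁S : h₁ ∈ S₁) (h₂S : h₂ ∈ S₂) (h₁0 : 0 ≤ h₁) (h₂0 : 0 ≤ h₂) :
    ‖h₁‖ * ‖h₂‖ ≤ ‖h₁ * h₂‖ := by
  rcases eq_or_ne h₁ 0 with rfl | hne₁
  · simp
  rcases eq_or_ne h₂ 0 with rfl | hne₂
  · simp
  have : Nontrivial A := nontrivial_of_ne h₁ 0 hne₁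
  have sa₁ : IsSelfAdjoint h₁ := .of_nonneg h₁0
  have sa₂ : IsSelfAdjoint h₂ := .of_nonneg h₂0
  set M₁ := ‖h₁‖ with hM₁
  set M₂ := ‖h₂‖ with hM₂
  have hM₁pos : 0 < M₁ := norm_pos_iff.mpr hne₁
  have hM₂pos : 0 < M₂ := norm_pos_iff.mpr hne₂
  -- it suffices to prove the estimate up to ε * (M₁ + M₂)
  have main : ∀ ε : ℝ, 0 < ε → M₁ * M₂ ≤ ‖h₁ * h₂‖ + ε * (M₁ + M₂) := by
    intro ε hε
    set f₁ : ℝ → ℝ := fun t => max 0 ((t - (M₁ - ε)) / ε) with hf₁def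
    set f₂ : ℝ → ℝ := fun t => max 0 ((t - (M₂ - ε)) / ε) with hf₂def
    have hf₁c : Continuous f₁ :=
      continuous_const.max ((continuous_id.sub continuous_const).div_const ε)
    have hf₂c : Continuous f₂ :=
      continuous_const.max ((continuous_id.sub continuous_const).div_const ε)
    have hf₁M : f₁ M₁ = 1 := by
      simp only [hf₁def]
      rw [show M₁ - (M₁ - ε) = ε by ring, div_self hε.ne']
      simp
    have hf₂M : f₂ M₂ = 1 := by
      simp only [hf₂def]
      rw [show M₂ - (M₂ - ε) = ε by ring, div_self hε.ne']
      simp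
    have hf₁nonneg : ∀ t, 0 ≤ f₁ t := fun t => le_max_left _ _
    have hf₂nonneg : ∀ t, 0 ≤ f₂ t := fun t => le_max_left _ _
    -- spectra bounds
    have hspec₁ : ∀ t ∈ spectrum ℝ h₁, 0 ≤ t ∧ t ≤ M₁ := fun t ht =>
      ⟨spectrum_nonneg_of_nonneg h₁0 ht,
        (Real.le_norm_self t).trans (spectrum.norm_le_norm_of_mem ht)⟩
    have hspec₂ : ∀ t ∈ spectrum ℝ h₂, 0 ≤ t ∧ t ≤ M₂ := fun t ht =>
      ⟨spectrum_nonneg_of_nonneg h₂0 ht,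
        (Real.le_norm_self t).trans (spectrum.norm_le_norm_of_mem ht)⟩
    -- key pointwise estimates
    have key1 : ∀ (M : ℝ) (f : ℝ → ℝ), (∀ t, 0 ≤ f t) →
        (∀ t, f t = max 0 ((t - (M - ε)) / ε)) →
        ∀ t, 0 ≤ t → t ≤ M → ((t - M) * f t) * ((t - M) * f t) ≤ (ε * f t) * (ε * f t) := by
      intro M f hfpos hfdef t ht0 htM
      rcases le_or_gt t (M - ε) with h | h
      · have : f t = 0 := by
          rw [hfdef]
          exact max_eq_left (div_nonpos_iff.mpr (Or.inr ⟨by linarith, hε.le⟩))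
        simp [this]
      · have h1 : M - t < ε := by linarith
        have h2 : 0 ≤ M - t := by linarith
        have h3 : (M - t) * (M - t) ≤ ε * ε := mul_self_le_mul_self h2 h1.le
        nlinarith [mul_le_mul_of_nonneg_right h3 (mul_nonneg (hfpos t) (hfpos t))]
    -- the elements
    set E₁ := cfc f₁ h₁ with hE₁def
    set E₂ := cfc f₂ h₂ with hE₂def
    have E₁S : E₁ ∈ S₁ := cfc_mem_of_mem_of_isClosed S₁ hS₁ h₁S sa₁ f₁
    have E₂S : E₂ ∈ S₂ := cfc_mem_of_mem_of_isClosed S₂ hS₂ h₂S sa₂ f₂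
    have hE₁ge : (1 : ℝ) ≤ ‖E₁‖ := by
      simpa [← hM₁, hf₁M] using norm_apply_le_norm_cfc f₁ h₁
        (CStarAlgebra.norm_mem_spectrum_of_nonneg h₁0) hf₁c.continuousOn sa₁
    have hE₂ge : (1 : ℝ) ≤ ‖E₂‖ := by
      simpa [← hM₂, hf₂M] using norm_apply_le_norm_cfc f₂ h₂
        (CStarAlgebra.norm_mem_spectrum_of_nonneg h₂0) hf₂c.continuousOn sa₂
    have hE₁ne : E₁ ≠ 0 := by
      intro h; rw [h, norm_zero] at hE₁ge; linarith
    have hE₂ne : E₂ ≠ 0 := by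
      intro h; rw [h, norm_zero] at hE₂ge; linarith
    have hEne : E₁ * E₂ ≠ 0 := hSch _ E₁S _ E₂S hE₁ne hE₂ne
    have hEpos : 0 < ‖E₁ * E₂‖ := norm_pos_iff.mpr hEne
    -- auxiliary cfc elements
    set u₁ := cfc (fun t => (t - M₁) * f₁ t) h₁ with hu₁def
    set u₂ := cfc (fun t => (t - M₂) * f₂ t) h₂ with hu₂def
    set g₁ := cfc (fun t => M₁ * f₁ t) h₁ with hg₁def
    set g₂ := cfc (fun t => M₂ * f₂ t) h₂ with hg₂def
    set q₁ := cfc (fun t => ε * f₁ t) h₁ with hq₁def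
    set q₂ := cfc (fun t => ε * f₂ t) h₂ with hq₂def
    set k₁ := cfc (fun t => t * f₁ t) h₁ with hk₁def
    set k₂ := cfc (fun t => t * f₂ t) h₂ with hk₂def
    -- memberships
    have u₂S : u₂ ∈ S₂ := cfc_mem_of_mem_of_isClosed S₂ hS₂ h₂S sa₂ _
    have q₁S : q₁ ∈ S₁ := cfc_mem_of_mem_of_isClosed S₁ hS₁ h₁S sa₁ _
    have g₁S : g₁ ∈ S₁ := cfc_mem_of_mem_of_isClosed S₁ hS₁ h₁S sa₁ _
    have k₂S : k₂ ∈ S₂ := cfc_mem_of_mem_of_isClosed S₂ hS₂ h₂S sa₂ _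
    -- selfadjointness
    have sau₁ : IsSelfAdjoint u₁ := cfc_predicate _ h₁
    have sau₂ : IsSelfAdjoint u₂ := cfc_predicate _ h₂
    have saq₁ : IsSelfAdjoint q₁ := cfc_predicate _ h₁
    have saq₂ : IsSelfAdjoint q₂ := cfc_predicate _ h₂
    have sak₂ : IsSelfAdjoint k₂ := cfc_predicate _ h₂
    have sag₂ : IsSelfAdjoint g₂ := cfc_predicate _ h₂
    -- identifications
    have hk₁eq : k₁ = h₁ * E₁ := by
      have h0 := cfc_mul (fun t : ℝ => t) f₁ h₁ continuous_id.continuousOn hf₁c.continuousOn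
      rw [cfc_id' ℝ h₁ sa₁] at h0
      exact h0
    have hk₂eq : k₂ = h₂ * E₂ := by
      have h0 := cfc_mul (fun t : ℝ => t) f₂ h₂ continuous_id.continuousOn hf₂c.continuousOn
      rw [cfc_id' ℝ h₂ sa₂] at h0
      exact h0
    have hg₁eq : g₁ = M₁ • E₁ := cfc_const_mul M₁ f₁ h₁ hf₁c.continuousOn
    have hg₂eq : g₂ = M₂ • E₂ := cfc_const_mul M₂ f₂ h₂ hf₂c.continuousOn
    have hq₁eq : q₁ = ε • E₁ := cfc_const_mul ε f₁ h₁ hf₁c.continuousOn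
    have hq₂eq : q₂ = ε • E₂ := cfc_const_mul ε f₂ h₂ hf₂c.continuousOn
    have hdec₁ : k₁ = u₁ + g₁ := by
      rw [hk₁def, hu₁def, hg₁def, ← cfc_add (a := h₁) (fun t => (t - M₁) * f₁ t) (fun t => M₁ * f₁ t)
        (((continuous_id.sub continuous_const).mul hf₁c).continuousOn)
        ((continuous_const.mul hf₁c).continuousOn)]
      exact cfc_congr fun t _ => by ring
    have hdec₂ : k₂ = u₂ + g₂ := by
      rw [hk₂def, hu₂def, hg₂def, ← cfc_add (a := h₂) (fun t => (t - M₂) * f₂ t) (fun t => M₂ * f₂ t)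
        (((continuous_id.sub continuous_const).mul hf₂c).continuousOn)
        ((continuous_const.mul hf₂c).continuousOn)]
      exact cfc_congr fun t _ => by ring
    -- the operator inequalities
    have ineq₁ : star u₁ * u₁ ≤ star q₁ * q₁ := by
      rw [sau₁.star_eq, saq₁.star_eq, hu₁def, hq₁def,
        ← cfc_mul (fun t => (t - M₁) * f₁ t) (fun t => (t - M₁) * f₁ t) h₁
          (by fun_prop) (by fun_prop),
        ← cfc_mul (fun t => ε * f₁ t) (fun t => ε * f₁ t) h₁ (by fun_prop) (by fun_prop)]
      exact cfc_mono
        (fun t ht => key1 M₁ f₁ hf₁nonneg (fun _ => rfl) t (hspec₁ t ht).1 (hspec₁ t ht).2)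
        (by fun_prop) (by fun_prop)
    have ineq₂ : star u₂ * u₂ ≤ star q₂ * q₂ := by
      rw [sau₂.star_eq, saq₂.star_eq, hu₂def, hq₂def,
        ← cfc_mul (fun t => (t - M₂) * f₂ t) (fun t => (t - M₂) * f₂ t) h₂
          (by fun_prop) (by fun_prop),
        ← cfc_mul (fun t => ε * f₂ t) (fun t => ε * f₂ t) h₂ (by fun_prop) (by fun_prop)]
      exact cfc_mono
        (fun t ht => key1 M₂ f₂ hf₂nonneg (fun _ => rfl) t (hspec₂ t ht).1 (hspec₂ t ht).2)
        (by fun_prop) (by fun_prop)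
    have ineqk₂ : star k₂ * k₂ ≤ star g₂ * g₂ := by
      rw [sak₂.star_eq, sag₂.star_eq, hk₂def, hg₂def,
        ← cfc_mul (fun t => t * f₂ t) (fun t => t * f₂ t) h₂ (by fun_prop) (by fun_prop),
        ← cfc_mul (fun t => M₂ * f₂ t) (fun t => M₂ * f₂ t) h₂ (by fun_prop) (by fun_prop)]
      refine cfc_mono (fun t ht => ?_) (by fun_prop) (by fun_prop)
      obtain ⟨ht0, htM⟩ := hspec₂ t ht
      have h3 : t * t ≤ M₂ * M₂ := mul_self_le_mul_self ht0 htM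
      nlinarith [mul_le_mul_of_nonneg_right h3 (mul_nonneg (hf₂nonneg t) (hf₂nonneg t))]
    -- norm estimates for the cross terms
    have est1 : ‖u₁ * k₂‖ ≤ ε * M₂ * ‖E₁ * E₂‖ := by
      calc ‖u₁ * k₂‖ ≤ ‖q₁ * k₂‖ := norm_mul_le_of_star_mul_le ineq₁ k₂
        _ = ‖k₂ * q₁‖ := by rw [hcomm _ q₁S _ k₂S]
        _ ≤ ‖g₂ * q₁‖ := norm_mul_le_of_star_mul_le ineqk₂ q₁
        _ = ε * M₂ * ‖E₁ * E₂‖ := by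
            rw [hg₂eq, hq₁eq, smul_mul_smul_comm, hcomm _ E₁S _ E₂S, norm_smul]
            rw [Real.norm_eq_abs, abs_of_nonneg (by positivity)]
            ring
    have est2 : ‖g₁ * u₂‖ ≤ M₁ * ε * ‖E₁ * E₂‖ := by
      calc ‖g₁ * u₂‖ = ‖u₂ * g₁‖ := by rw [hcomm _ g₁S _ u₂S]
        _ ≤ ‖q₂ * g₁‖ := norm_mul_le_of_star_mul_le ineq₂ g₁
        _ = ‖g₁ * q₂‖ := by rw [hcomm _ g₁S _ (cfc_mem_of_mem_of_isClosed S₂ hS₂ h₂S sa₂ _)]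
        _ = M₁ * ε * ‖E₁ * E₂‖ := by
            rw [hg₁eq, hq₂eq, smul_mul_smul_comm, norm_smul]
            rw [Real.norm_eq_abs, abs_of_nonneg (by positivity)]
    -- the decomposition
    have hdec : g₁ * g₂ = k₁ * k₂ - u₁ * k₂ - g₁ * u₂ := by
      have h0 : k₁ * k₂ = u₁ * k₂ + (g₁ * u₂ + g₁ * g₂) := by
        rw [hdec₁, hdec₂]; noncomm_ring
      rw [h0]; abel
    have hk₁k₂ : k₁ * k₂ = (h₁ * h₂) * (E₁ * E₂) := by
      rw [hk₁eq, hk₂eq]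
      simp only [mul_assoc]
      rw [← mul_assoc E₁ h₂ E₂, hcomm _ E₁S _ h₂S, mul_assoc]
    have hgg : ‖g₁ * g₂‖ = M₁ * M₂ * ‖E₁ * E₂‖ := by
      rw [hg₁eq, hg₂eq, smul_mul_smul_comm, norm_smul]
      rw [Real.norm_eq_abs, abs_of_nonneg (by positivity)]
    have hkk : ‖k₁ * k₂‖ ≤ ‖h₁ * h₂‖ * ‖E₁ * E₂‖ := by
      rw [hk₁k₂]; exact norm_mul_le _ _
    have main_est : M₁ * M₂ * ‖E₁ * E₂‖ ≤
        ‖h₁ * h₂‖ * ‖E₁ * E₂‖ + ε * M₂ * ‖E₁ * E₂‖ + M₁ * ε * ‖E₁ * E₂‖ := by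
      calc M₁ * M₂ * ‖E₁ * E₂‖ = ‖g₁ * g₂‖ := hgg.symm
        _ = ‖k₁ * k₂ - u₁ * k₂ - g₁ * u₂‖ := by rw [hdec]
        _ ≤ ‖k₁ * k₂ - u₁ * k₂‖ + ‖g₁ * u₂‖ := norm_sub_le _ _
        _ ≤ ‖k₁ * k₂‖ + ‖u₁ * k₂‖ + ‖g₁ * u₂‖ := by
            have := norm_sub_le (k₁ * k₂) (u₁ * k₂); linarith
        _ ≤ ‖h₁ * h₂‖ * ‖E₁ * E₂‖ + ε * M₂ * ‖E₁ * E₂‖ + M₁ * ε * ‖E₁ * E₂‖ := by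
            linarith
    nlinarith [hEpos, main_est]
  refine le_of_forall_pos_le_add fun δ hδ => ?_
  have hMM : 0 < M₁ + M₂ := by linarith
  have := main (δ / (M₁ + M₂)) (div_pos hδ hMM)
  calc M₁ * M₂ ≤ ‖h₁ * h₂‖ + δ / (M₁ + M₂) * (M₁ + M₂) := this
    _ = ‖h₁ * h₂‖ + δ := by rw [div_mul_cancel₀ _ hMM.ne']

end aux

/-- If two mutually commuting C*-subalgebras of a C*-algebra are Schlieder independent,
then `‖A₁A₂‖ = ‖A₁‖·‖A₂‖` for all `A₁ ∈ 𝔄₁` and `A₂ ∈ 𝔄₂`. -/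
theorem norm_mul_of_schlieder {A : Type*} [NormedRing A] [StarRing A] [CStarRing A]
    [NormedAlgebra ℂ A] [StarModule ℂ A] [CompleteSpace A]
    (S₁ S₂ : StarSubalgebra ℂ A)
    (hS₁ : IsClosed (S₁ : Set A)) (hS₂ : IsClosed (S₂ : Set A))
    (hcomm : ∀ a ∈ S₁, ∀ b ∈ S₂, a * b = b * a)
    (hSch : ∀ a ∈ S₁, ∀ b ∈ S₂, a ≠ 0 → b ≠ 0 → a * b ≠ 0) :
    ∀ a ∈ S₁, ∀ b ∈ S₂, ‖a * b‖ = ‖a‖ * ‖b‖ := by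
  letI : CStarAlgebra A := ⟨⟩
  letI : PartialOrder A := CStarAlgebra.spectralOrder A
  letI : StarOrderedRing A := CStarAlgebra.spectralOrderedRing A
  intro a ha b hb
  refine le_antisymm (norm_mul_le a b) ?_
  have haa : star a * a ∈ S₁ := mul_mem (star_mem ha) ha
  have hbb : star b * b ∈ S₂ := mul_mem (star_mem hb) hb
  have hcore := core_schlieder hS₁ hS₂ hcomm hSch haa hbb
    (star_mul_self_nonneg a) (star_mul_self_nonneg b)
  have hrw : star (a * b) * (a * b) = (star a * a) * (star b * b) := by
    rw [star_mul]
    calc star b * star a * (a * b) = star b * (star a * a) * b := by rw [mul_assoc, mul_assoc, mul_assoc]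
      _ = (star a * a) * star b * b := by rw [hcomm _ haa _ (star_mem hb)]
      _ = (star a * a) * (star b * b) := by rw [mul_assoc]
  have hsq : ‖a * b‖ * ‖a * b‖ = ‖(star a * a) * (star b * b)‖ := by
    rw [← CStarRing.norm_star_mul_self, hrw]
  have h1 : ‖star a * a‖ * ‖star b * b‖ ≤ ‖a * b‖ * ‖a * b‖ := hsq ▸ hcore
  rw [CStarRing.norm_star_mul_self, CStarRing.norm_star_mul_self] at h1
  nlinarith [norm_nonneg (a * b), mul_nonneg (norm_nonneg a) (norm_nonneg b)]
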